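/- A permutation π of length n ≥ 2 contains the mesh pattern (12, {(0,0),(0,1),(0,2),(2,0),(2,1),(2,2)}) if and only if π(1) < π(n), i.e. its first letter is smaller than its last. Consequently, exactly half of the permutations of length n contain this pattern, so the number of permutations of length n avoiding it is n!/2 for all n ≥ 2. -/

import Mathlib

/-- 1-based position boundaries of an occurrence: `posOf x 0 = 0`,
`posOf x i = x_i` (1-based) for `1 ≤ i ≤ k`, and `posOf x i = n+1` for `i > k`. -/
def posOf {k n : ℕ} (x : Fin k → Fin n) (i : ℕ) : ℕ :=
  if h : 1 ≤ i ∧ i ≤ k then (x ⟨i - 1, by omega⟩ : ℕ) + 1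
  else if i = 0 then 0 else n + 1

/-- 1-based value boundaries of an occurrence: `valOf τ x π 0 = 0`,
`valOf τ x π j = y_j`, the `j`-th smallest of the values `π(x_1),…,π(x_k)`
(which equals `π(x_{τ⁻¹(j)})` for an occurrence of the classical pattern `τ`),
and `n+1` for `j > k`. -/
def valOf {k n : ℕ} (τ : Equiv.Perm (Fin k)) (x : Fin k → Fin n)
    (π : Equiv.Perm (Fin n)) (j : ℕ) : ℕ :=
  if h : 1 ≤ j ∧ j ≤ k then (π (x (τ.symm ⟨j - 1, by omega⟩)) : ℕ) + 1
  else if j = 0 then 0 else n + 1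

/-- `π` (a permutation of length `n`, 0-indexed via `Fin n`) contains the mesh
pattern `(τ, R)`, where boxes in `R` are given with 0-based coordinates in `[0,k]²`.
All positions/values are converted to 1-based via `+1`. -/
def MeshOccursIn {k n : ℕ} (τ : Equiv.Perm (Fin k)) (R : Set (ℕ × ℕ))
    (π : Equiv.Perm (Fin n)) : Prop :=
  ∃ x : Fin k → Fin n, StrictMono x ∧
    (∀ a b : Fin k, π (x a) < π (x b) ↔ τ a < τ b) ∧
    ∀ r ∈ R, ∀ z : Fin n,
      ¬ (posOf x r.1 < (z : ℕ) + 1 ∧ (z : ℕ) + 1 < posOf x (r.1 + 1) ∧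
         valOf τ x π r.2 < (π z : ℕ) + 1 ∧ (π z : ℕ) + 1 < valOf τ x π (r.2 + 1))

/-- `π` avoids the mesh pattern `(τ, R)`. -/
def MeshAvoids {k n : ℕ} (τ : Equiv.Perm (Fin k)) (R : Set (ℕ × ℕ))
    (π : Equiv.Perm (Fin n)) : Prop := ¬ MeshOccursIn τ R π


section
variable {n : ℕ}

lemma posOf_zero (x : Fin 2 → Fin n) : posOf x 0 = 0 := by simp [posOf]
lemma posOf_one (x : Fin 2 → Fin n) : posOf x 1 = (x 0 : ℕ) + 1 := by simp [posOf]
lemma posOf_two (x : Fin 2 → Fin n) : posOf x 2 = (x 1 : ℕ) + 1 := by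
  simp [posOf]
lemma posOf_three (x : Fin 2 → Fin n) : posOf x 3 = n + 1 := by simp [posOf]

lemma valOf_zero (x : Fin 2 → Fin n) (π : Equiv.Perm (Fin n)) :
    valOf 1 x π 0 = 0 := by simp [valOf]
lemma valOf_one (x : Fin 2 → Fin n) (π : Equiv.Perm (Fin n)) :
    valOf 1 x π 1 = (π (x 0) : ℕ) + 1 := by simp [valOf]; rfl
lemma valOf_two (x : Fin 2 → Fin n) (π : Equiv.Perm (Fin n)) :
    valOf 1 x π 2 = (π (x 1) : ℕ) + 1 := by simp [valOf]; rfl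
lemma valOf_three (x : Fin 2 → Fin n) (π : Equiv.Perm (Fin n)) :
    valOf 1 x π 3 = n + 1 := by simp [valOf]

end

lemma key (n : ℕ) (hn : 2 ≤ n) (π : Equiv.Perm (Fin n)) :
    MeshOccursIn (1 : Equiv.Perm (Fin 2)) {(0,0),(0,1),(0,2),(2,0),(2,1),(2,2)} π ↔
      π ⟨0, Nat.lt_of_lt_of_le (by norm_num) hn⟩ < π ⟨n - 1, Nat.sub_lt (Nat.lt_of_lt_of_le (by norm_num) hn) one_pos⟩ := by
  constructor
  · rintro ⟨x, hmono, hpat, hbox⟩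
    have h01 : π (x 0) < π (x 1) := by
      have := hpat 0 1
      simpa using this
    -- x 0 = 0
    have hx0 : (x 0 : ℕ) = 0 := by
      by_contra h
      set z : Fin n := ⟨0, Nat.lt_of_lt_of_le (by norm_num) hn⟩ with hz
      have hzx0 : z < x 0 := by
        apply Fin.lt_def.mpr; simp [hz]; omega
      have hzx1 : z < x 1 := lt_trans hzx0 (hmono (by norm_num))
      have hne0 : π z ≠ π (x 0) := fun hc => absurd (π.injective hc) (ne_of_lt hzx0)
      have hne1 : π z ≠ π (x 1) := fun hc => absurd (π.injective hc) (ne_of_lt hzx1)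
      have hpos1 : posOf x 0 < (z : ℕ) + 1 := by rw [posOf_zero]; omega
      have hpos2 : (z : ℕ) + 1 < posOf x 1 := by rw [posOf_one]; simp [hz]; omega
      rcases lt_trichotomy (π z) (π (x 0)) with hlt | heq | hgt
      · exact hbox (0,0) (by simp) z ⟨hpos1, hpos2, by rw [valOf_zero]; omega,
          by rw [valOf_one]; exact_mod_cast Nat.add_lt_add_right hlt 1⟩
      · exact hne0 heq
      · rcases lt_trichotomy (π z) (π (x 1)) with hlt' | heq' | hgt'
        · exact hbox (0,1) (by simp) z ⟨hpos1, hpos2,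
            by rw [valOf_one]; exact_mod_cast Nat.add_lt_add_right hgt 1,
            by rw [valOf_two]; exact_mod_cast Nat.add_lt_add_right hlt' 1⟩
        · exact hne1 heq'
        · exact hbox (0,2) (by simp) z ⟨hpos1, hpos2,
            by rw [valOf_two]; exact_mod_cast Nat.add_lt_add_right hgt' 1,
            by rw [valOf_three]; have := (π z).isLt; omega⟩
    -- x 1 = n - 1
    have hx1 : (x 1 : ℕ) = n - 1 := by
      by_contra h
      set z : Fin n := ⟨n - 1, Nat.sub_lt (Nat.lt_of_lt_of_le (by norm_num) hn) one_pos⟩ with hz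
      have hzx1 : x 1 < z := by
        apply Fin.lt_def.mpr; simp [hz]; have := (x 1).isLt; omega
      have hzx0 : x 0 < z := lt_trans (hmono (by norm_num)) hzx1
      have hne0 : π z ≠ π (x 0) := fun hc => absurd (π.injective hc) (ne_of_gt hzx0)
      have hne1 : π z ≠ π (x 1) := fun hc => absurd (π.injective hc) (ne_of_gt hzx1)
      have hpos1 : posOf x 2 < (z : ℕ) + 1 := by rw [posOf_two]; omega
      have hpos2 : (z : ℕ) + 1 < posOf x 3 := by
        rw [posOf_three]; simp [hz]; omega
      rcases lt_trichotomy (π z) (π (x 0)) with hlt | heq | hgt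
      · exact hbox (2,0) (by simp) z ⟨hpos1, hpos2, by rw [valOf_zero]; omega,
          by rw [valOf_one]; exact_mod_cast Nat.add_lt_add_right hlt 1⟩
      · exact hne0 heq
      · rcases lt_trichotomy (π z) (π (x 1)) with hlt' | heq' | hgt'
        · exact hbox (2,1) (by simp) z ⟨hpos1, hpos2,
            by rw [valOf_one]; exact_mod_cast Nat.add_lt_add_right hgt 1,
            by rw [valOf_two]; exact_mod_cast Nat.add_lt_add_right hlt' 1⟩
        · exact hne1 heq'
        · exact hbox (2,2) (by simp) z ⟨hpos1, hpos2,
            by rw [valOf_two]; exact_mod_cast Nat.add_lt_add_right hgt' 1,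
            by rw [valOf_three]; have := (π z).isLt; omega⟩
    have e0 : x 0 = ⟨0, Nat.lt_of_lt_of_le (by norm_num) hn⟩ := Fin.ext hx0
    have e1 : x 1 = ⟨n - 1, Nat.sub_lt (Nat.lt_of_lt_of_le (by norm_num) hn) one_pos⟩ := Fin.ext hx1
    rw [e0, e1] at h01
    exact h01
  · intro h
    refine ⟨![⟨0, Nat.lt_of_lt_of_le (by norm_num) hn⟩, ⟨n - 1, Nat.sub_lt (Nat.lt_of_lt_of_le (by norm_num) hn) one_pos⟩], ?_, ?_, ?_⟩
    · intro a b hab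
      fin_cases a <;> fin_cases b <;>
        first
          | exact absurd hab (by decide)
          | exact Fin.lt_def.mpr (by simp; omega)
    · intro a b
      fin_cases a <;> fin_cases b <;>
        simp [Fin.lt_def, h, le_of_lt h, not_lt_of_gt h]
    · rintro ⟨i, j⟩ hij z
      rintro ⟨h1, h2, h3, h4⟩
      have : i = 0 ∨ i = 2 := by
        rcases hij with h|h|h|h|h|h <;> simp_all
      rcases this with rfl | rfl
      · rw [posOf_one] at h2; simp at h2
      · rw [posOf_two] at h1
        rw [posOf_three] at h2
        simp at h1
        have := z.isLt
        omega

/-- For `n ≥ 2`, a permutation contains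
`(12, {(0,0),(0,1),(0,2),(2,0),(2,1),(2,2)})` iff its first letter is smaller
than its last; exactly half the permutations contain it, so `n!/2` avoid it. -/
theorem stmt7 (n : ℕ) (hn : 2 ≤ n) :
    (∀ π : Equiv.Perm (Fin n),
      MeshOccursIn (1 : Equiv.Perm (Fin 2)) {(0,0),(0,1),(0,2),(2,0),(2,1),(2,2)} π ↔
        π ⟨0, by omega⟩ < π ⟨n - 1, by omega⟩) ∧
    2 * Nat.card {π : Equiv.Perm (Fin n) //
        MeshOccursIn (1 : Equiv.Perm (Fin 2)) {(0,0),(0,1),(0,2),(2,0),(2,1),(2,2)} π} =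
      n.factorial ∧
    Nat.card {π : Equiv.Perm (Fin n) //
        MeshAvoids (1 : Equiv.Perm (Fin 2)) {(0,0),(0,1),(0,2),(2,0),(2,1),(2,2)} π} =
      n.factorial / 2 := by
  set i0 : Fin n := ⟨0, by omega⟩
  set i1 : Fin n := ⟨n - 1, by omega⟩
  have hne : i0 ≠ i1 := by simp [i0, i1, Fin.ext_iff]; omega
  have hkey := key n hn
  set P : Equiv.Perm (Fin n) → Prop := fun π => π i0 < π i1 with hP
  have hkey' : ∀ π, MeshOccursIn (1 : Equiv.Perm (Fin 2))
      {(0,0),(0,1),(0,2),(2,0),(2,1),(2,2)} π ↔ P π := hkey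
  classical
  set s : Finset (Equiv.Perm (Fin n)) := Finset.univ.filter P with hs
  set t : Finset (Equiv.Perm (Fin n)) := Finset.univ.filter (fun π => ¬ P π) with ht
  have hst : s.card + t.card = n.factorial := by
    rw [hs, ht, Finset.card_filter_add_card_filter_not]
    simp [Fintype.card_perm]
  have hcard_eq : s.card = t.card := by
    apply Finset.card_bij' (fun π _ => π * Equiv.swap i0 i1)
      (fun π _ => π * Equiv.swap i0 i1)
    · intro π hπ
      simp only [hs, Finset.mem_filter, Finset.mem_univ, true_and] at hπ
      simp only [ht, Finset.mem_filter, Finset.mem_univ, true_and, hP]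
      simp [Equiv.swap_apply_left, Equiv.swap_apply_right]
      exact le_of_lt hπ
    · intro π hπ
      simp only [ht, Finset.mem_filter, Finset.mem_univ, true_and, hP] at hπ
      simp only [hs, Finset.mem_filter, Finset.mem_univ, true_and, hP]
      simp [Equiv.swap_apply_left, Equiv.swap_apply_right]
      have : π i1 ≠ π i0 := fun hc => hne (π.injective hc).symm
      push_neg at hπ
      exact lt_of_le_of_ne hπ this
    · intro π _; ext z; simp [mul_assoc]
    · intro π _; ext z; simp [mul_assoc]
  have hoccur : Nat.card {π : Equiv.Perm (Fin n) //
      MeshOccursIn (1 : Equiv.Perm (Fin 2)) {(0,0),(0,1),(0,2),(2,0),(2,1),(2,2)} π}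
      = s.card := by
    rw [Nat.card_congr (Equiv.subtypeEquivRight hkey')]
    rw [Nat.card_eq_fintype_card, Fintype.card_subtype]
  have havoid : Nat.card {π : Equiv.Perm (Fin n) //
      MeshAvoids (1 : Equiv.Perm (Fin 2)) {(0,0),(0,1),(0,2),(2,0),(2,1),(2,2)} π}
      = t.card := by
    have : ∀ π, MeshAvoids (1 : Equiv.Perm (Fin 2))
        {(0,0),(0,1),(0,2),(2,0),(2,1),(2,2)} π ↔ ¬ P π := by
      intro π; unfold MeshAvoids; rw [hkey']
    rw [Nat.card_congr (Equiv.subtypeEquivRight this)]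
    rw [Nat.card_eq_fintype_card, Fintype.card_subtype]
  refine ⟨hkey, ?_, ?_⟩
  · rw [hoccur]; omega
  · rw [havoid]; omega
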